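/- Let k ≥ 2 and let n > 2k−1 be such that 2k−2 divides n−1, and set a = (n−1)/(2k−2). Let T be the k-uniform star-like tree of order n consisting of a center vertex v and a arms P₁,…,P_a, where the i-th arm has the two edges {v, w₁ⁱ, w₂ⁱ, …, w_{k−1}ⁱ} and {w_{k−1}ⁱ, w_kⁱ, …, w_{2k−2}ⁱ}, and all vertices w_jⁱ (1 ≤ i ≤ a, 1 ≤ j ≤ 2k−2) are pairwise distinct. Then R̂(T) ≥ (1/3)·a² = (1/3)·((n−1)/(2k−2))². -/

import Mathlib

/-- A `k`-uniform hypergraph on a finite vertex set of naturals: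
each edge is a `k`-element subset of the vertex set. -/
structure KHypergraph (k : ℕ) where
  verts : Finset ℕ
  edges : Finset (Finset ℕ)
  card_eq : ∀ e ∈ edges, e.card = k
  subset_verts : ∀ e ∈ edges, e ⊆ verts

namespace KHypergraph

/-- `H.IsCopy G f` : the injection `f` embeds `G` into `H` as a subhypergraph. -/
def IsCopy {k : ℕ} (H G : KHypergraph k) (f : ℕ → ℕ) : Prop :=
  Set.InjOn f ↑G.verts ∧ Set.MapsTo f ↑G.verts ↑H.verts ∧
    ∀ e ∈ G.edges, e.image f ∈ H.edges

/-- `H.Arrows G` : every 2-coloring of the edges of `H` yields a monochromatic copy of `G`. -/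
def Arrows {k : ℕ} (H G : KHypergraph k) : Prop :=
  ∀ χ : Finset ℕ → Bool, ∃ (f : ℕ → ℕ) (c : Bool),
    H.IsCopy G f ∧ ∀ e ∈ G.edges, χ (e.image f) = c

/-- The size-Ramsey number `R̂(G)`: the least number of edges of a hypergraph `H` with `H → G`. -/
noncomputable def sizeRamsey {k : ℕ} (G : KHypergraph k) : ℕ :=
  sInf { m | ∃ H : KHypergraph k, H.Arrows G ∧ H.edges.card = m }

/-- The complete `k`-uniform hypergraph on `N` vertices. -/
def completeHG (k N : ℕ) : KHypergraph k where
  verts := Finset.range N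
  edges := Finset.powersetCard k (Finset.range N)
  card_eq := fun _ he => (Finset.mem_powersetCard.mp he).2
  subset_verts := fun _ he => (Finset.mem_powersetCard.mp he).1

/-- The Ramsey number `R(G)`: the least `N` with `K_N^(k) → G`. -/
noncomputable def ramsey {k : ℕ} (G : KHypergraph k) : ℕ :=
  sInf { N | (completeHG k N).Arrows G }

end KHypergraph


section SizeRamseyAux
open Finset


/-- First edge of arm `i` (contains the center `0`). -/
def armE (K i : ℕ) : Finset ℕ :=
  insert 0 ((Finset.range K).image fun j => i * (2 * K) + 1 + j)

/-- Second edge of arm `i`. -/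
def armF (K i : ℕ) : Finset ℕ :=
  (Finset.range (K + 1)).image fun j => i * (2 * K) + K + j

lemma mem_armE {K i x : ℕ} :
    x ∈ armE K i ↔ x = 0 ∨ (i * (2 * K) + 1 ≤ x ∧ x ≤ i * (2 * K) + K) := by
  simp only [armE, Finset.mem_insert, Finset.mem_image, Finset.mem_range]
  constructor
  · rintro (rfl | ⟨j, hj, rfl⟩)
    · exact Or.inl rfl
    · exact Or.inr ⟨by omega, by omega⟩
  · rintro (rfl | ⟨h1, h2⟩)
    · exact Or.inl rfl
    · exact Or.inr ⟨x - (i * (2 * K) + 1), by omega, by omega⟩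

lemma mem_armF {K i x : ℕ} :
    x ∈ armF K i ↔ i * (2 * K) + K ≤ x ∧ x ≤ i * (2 * K) + 2 * K := by
  simp only [armF, Finset.mem_image, Finset.mem_range]
  constructor
  · rintro ⟨j, hj, rfl⟩; omega
  · rintro ⟨h1, h2⟩; exact ⟨x - (i * (2 * K) + K), by omega, by omega⟩

lemma mul_sep {K i j : ℕ} (hij : i < j) : i * (2 * K) + 2 * K ≤ j * (2 * K) := by
  have := Nat.mul_le_mul_right (2 * K) (show i + 1 ≤ j by omega)
  rw [add_mul, one_mul] at this
  exact this

lemma armE_overlap {K : ℕ} (hK : 1 ≤ K) {i j x : ℕ}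
    (hi : x ∈ armE K i) (hj : x ∈ armE K j) (hx : x ≠ 0) : i = j := by
  rw [mem_armE] at hi hj
  rcases hi with rfl | ⟨hi1, hi2⟩; · omega
  rcases hj with rfl | ⟨hj1, hj2⟩; · omega
  by_contra hne
  rcases Nat.lt_or_ge i j with h | h
  · have := mul_sep (K := K) h; omega
  · have := mul_sep (K := K) (show j < i by omega); omega

lemma armF_overlap {K : ℕ} (hK : 1 ≤ K) {i j x : ℕ}
    (hi : x ∈ armF K i) (hj : x ∈ armF K j) : i = j := by
  rw [mem_armF] at hi hj
  by_contra hne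
  rcases Nat.lt_or_ge i j with h | h
  · have := mul_sep (K := K) h; omega
  · have := mul_sep (K := K) (show j < i by omega); omega

lemma armE_subset {K a i : ℕ} (hi : i < a) :
    armE K i ⊆ Finset.range (a * (2 * K) + 1) := by
  intro x hx
  rw [mem_armE] at hx
  rw [Finset.mem_range]
  rcases hx with rfl | ⟨h1, h2⟩
  · omega
  · rcases Nat.lt_or_ge i a with h | h
    · have : i * (2 * K) + 2 * K ≤ a * (2 * K) := mul_sep h
      omega
    · omega

lemma armF_subset {K a i : ℕ} (hi : i < a) :
    armF K i ⊆ Finset.range (a * (2 * K) + 1) := by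
  intro x hx
  rw [mem_armF] at hx
  rw [Finset.mem_range]
  have : i * (2 * K) + 2 * K ≤ a * (2 * K) := mul_sep hi
  omega


lemma greedyCover (a : ℕ) (ha : 1 ≤ a) (E : Finset (Finset ℕ)) :
    ∃ C : Finset ℕ, a * C.card ≤ E.card ∧
      ∀ v : ℕ, (E.filter fun e => v ∈ e ∧ ∀ u ∈ C, u ∉ e).card < a := by
  classical
  generalize hn : E.card = n
  induction n using Nat.strong_induction_on generalizing E with
  | _ n ih =>
    by_cases h : ∀ v : ℕ, (E.filter fun e => v ∈ e).card < a
    · refine ⟨∅, by simp, fun v => lt_of_le_of_lt (Finset.card_le_card ?_) (h v)⟩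
      intro e he
      simp only [Finset.mem_filter] at he ⊢
      exact ⟨he.1, he.2.1⟩
    · push_neg at h
      obtain ⟨v, hv⟩ := h
      set E' := E.filter (fun e => v ∉ e) with hE'
      have hsplit : (E.filter fun e => v ∈ e).card + E'.card = E.card := by
        rw [hE']
        exact Finset.card_filter_add_card_filter_not (fun e => v ∈ e)
      have hlt : E'.card < n := by omega
      obtain ⟨C', h1, h2⟩ := ih E'.card hlt E' rfl
      refine ⟨insert v C', ?_, ?_⟩
      · calc a * (insert v C').card ≤ a * (C'.card + 1) :=
              Nat.mul_le_mul_left a (Finset.card_insert_le _ _)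
          _ = a * C'.card + a := by ring
          _ ≤ E'.card + a := by omega
          _ ≤ n := by omega
      · intro u
        refine lt_of_le_of_lt (Finset.card_le_card ?_) (h2 u)
        intro e he
        simp only [Finset.mem_filter, hE', Finset.mem_insert] at he ⊢
        obtain ⟨heE, hue, havoid⟩ := he
        exact ⟨⟨heE, havoid v (Or.inl rfl)⟩, hue, fun x hx => havoid x (Or.inr hx)⟩


/-- `w` is `c`-rich w.r.t. `U`: for every small forbidden set `S`, there is a `c`-colored
`k`-set through `w`, inside `insert w U`, avoiding `S` (except possibly at `w`). -/
def Rich (χ : Finset ℕ → Bool) (k B : ℕ) (U : Finset ℕ) (c : Bool) (w : ℕ) : Prop :=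
  ∀ S : Finset ℕ, S.card ≤ B → ∃ g : Finset ℕ,
    g.card = k ∧ w ∈ g ∧ g ⊆ insert w U ∧ (∀ x ∈ S, x ∈ g → x = w) ∧ χ g = c

lemma rich_total (χ : Finset ℕ → Bool) (k B : ℕ) (hk : 1 ≤ k) (U : Finset ℕ)
    (hU : 2 * B + k ≤ U.card) (w : ℕ) :
    Rich χ k B U true w ∨ Rich χ k B U false w := by
  classical
  by_cases h : Rich χ k B U true w
  · exact Or.inl h
  · right
    rw [Rich] at h
    push_neg at h
    obtain ⟨S₀, hS₀, hall⟩ := h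
    intro S hS
    have hcard : k - 1 ≤ (U \ (S ∪ S₀ ∪ {w})).card := by
      have h1 : (U \ (S ∪ S₀ ∪ {w})).card ≥ U.card - (S ∪ S₀ ∪ {w}).card :=
        le_card_sdiff _ _
      have h2 : (S ∪ S₀ ∪ {w}).card ≤ S.card + S₀.card + 1 := by
        refine (Finset.card_union_le _ _).trans ?_
        have := Finset.card_union_le S S₀
        simp only [Finset.card_singleton]
        omega
      omega
    obtain ⟨A, hA_sub, hA_card⟩ := Finset.exists_subset_card_eq hcard
    have hwA : w ∉ A := by
      intro hw
      have := hA_sub hw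
      simp [Finset.mem_sdiff] at this
    refine ⟨insert w A, ?_, Finset.mem_insert_self _ _, ?_, ?_, ?_⟩
    · rw [Finset.card_insert_of_notMem hwA, hA_card]; omega
    · intro x hx
      rcases Finset.mem_insert.mp hx with rfl | hx
      · exact Finset.mem_insert_self _ _
      · exact Finset.mem_insert_of_mem ((Finset.mem_sdiff.mp (hA_sub hx)).1)
    · intro x hxS hxg
      rcases Finset.mem_insert.mp hxg with rfl | hx
      · rfl
      · exfalso
        have := (Finset.mem_sdiff.mp (hA_sub hx)).2
        simp only [Finset.mem_union, Finset.mem_singleton] at this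
        exact this (Or.inl (Or.inl hxS))
    · have := hall (insert w A)
        (by rw [Finset.card_insert_of_notMem hwA, hA_card]; omega)
        (Finset.mem_insert_self _ _)
        (by intro x hx
            rcases Finset.mem_insert.mp hx with rfl | hx
            · exact Finset.mem_insert_self _ _
            · exact Finset.mem_insert_of_mem ((Finset.mem_sdiff.mp (hA_sub hx)).1))
        (by intro x hxS hxg
            rcases Finset.mem_insert.mp hxg with rfl | hx
            · rfl
            · exfalso
              have := (Finset.mem_sdiff.mp (hA_sub hx)).2
              simp only [Finset.mem_union, Finset.mem_singleton] at this
              exact this (Or.inl (Or.inr hxS)))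
      simpa using this

/-- Enumerate a finset of naturals of card `m` by `[0, m)`. -/
lemma enum_exists (s : Finset ℕ) {m : ℕ} (h : s.card = m) :
    ∃ g : ℕ → ℕ, ((Finset.range m).image g = s) ∧
      (∀ t₁ < m, ∀ t₂ < m, g t₁ = g t₂ → t₁ = t₂) := by
  classical
  let iso := s.orderIsoOfFin h
  refine ⟨fun t => if ht : t < m then (iso ⟨t, ht⟩ : ℕ) else 0, ?_, ?_⟩
  · apply Finset.Subset.antisymm
    · intro y hy
      obtain ⟨t, ht, rfl⟩ := Finset.mem_image.mp hy
      rw [Finset.mem_range] at ht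
      simp only [dif_pos ht]
      exact (iso ⟨t, ht⟩).2
    · intro y hy
      obtain ⟨t, ht⟩ := iso.surjective ⟨y, hy⟩
      refine Finset.mem_image.mpr ⟨t.1, Finset.mem_range.mpr t.2, ?_⟩
      simp only [dif_pos t.2]
      rw [Fin.eta, ht]
  · intro t₁ h1 t₂ h2 heq
    simp only [dif_pos h1, dif_pos h2] at heq
    have := iso.injective (Subtype.ext heq)
    exact congrArg Fin.val this

lemma build_copy (K a N B : ℕ) (hK : 1 ≤ K) (hB : B = a * (2 * K) + 1 + (K + 1))
    (χ : Finset ℕ → Bool) (U₀ U₁ : Finset ℕ) (c : Bool) (v : ℕ)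
    (hU₀ : U₀ ⊆ Finset.range N) (hsub : U₁ ⊆ U₀) (hv : v ∈ Finset.range N)
    (hrich1 : ∀ w ∈ U₁, Rich χ (K + 1) B U₀ c w)
    (hvrich : Rich χ (K + 1) B U₁ c v) :
    ∀ i, i ≤ a → ∃ φ : ℕ → ℕ, φ 0 = v ∧
      Set.InjOn φ ↑(Finset.range (i * (2 * K) + 1)) ∧
      (∀ x ∈ Finset.range (i * (2 * K) + 1), φ x ∈ Finset.range N) ∧
      (∀ j < i, χ ((armE K j).image φ) = c ∧ χ ((armF K j).image φ) = c) := by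
  classical
  intro i
  induction i with
  | zero =>
    intro _
    refine ⟨fun _ => v, rfl, ?_, ?_, by omega⟩
    · intro x hx y hy _
      simp only [Finset.coe_range, Set.mem_Iio] at hx hy
      omega
    · intro x _; exact hv
  | succ i ih =>
    intro hia
    obtain ⟨φ, hφ0, hinj, hmaps, hcolor⟩ := ih (by omega)
    have hilt : i < a := by omega
    have hstep : i * (2 * K) + 2 * K ≤ a * (2 * K) := mul_sep hilt
    -- the used vertex set
    set S : Finset ℕ := (Finset.range (i * (2 * K) + 1)).image φ with hSdef
    have hS_card : S.card ≤ B := by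
      have h1 : S.card ≤ i * (2 * K) + 1 :=
        (Finset.card_image_le).trans (by rw [Finset.card_range])
      omega
    obtain ⟨e, he_card, hv_e, he_sub, he_avoid, he_c⟩ := hvrich S hS_card
    have hev_card : (e.erase v).card = K := by
      rw [Finset.card_erase_of_mem hv_e, he_card]; omega
    obtain ⟨g, hg_img, hg_inj⟩ := enum_exists (e.erase v) hev_card
    have hmem1 : ∀ t < K, g t ∈ e.erase v := by
      intro t ht
      rw [← hg_img]
      exact Finset.mem_image.mpr ⟨t, Finset.mem_range.mpr ht, rfl⟩
    set w : ℕ := g (K - 1) with hwdef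
    have hw_mem : w ∈ e.erase v := hmem1 _ (by omega)
    have hw_ne_v : w ≠ v := (Finset.mem_erase.mp hw_mem).1
    have hw_U1 : w ∈ U₁ := by
      have := he_sub (Finset.mem_of_mem_erase hw_mem)
      rcases Finset.mem_insert.mp this with h | h
      · exact absurd h hw_ne_v
      · exact h
    have hSe_card : (S ∪ e).card ≤ B := by
      have := Finset.card_union_le S e
      have h1 : S.card ≤ i * (2 * K) + 1 :=
        (Finset.card_image_le).trans (by rw [Finset.card_range])
      omega
    obtain ⟨f, hf_card, hw_f, hf_sub, hf_avoid, hf_c⟩ := hrich1 w hw_U1 (S ∪ e) hSe_card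
    have hfw_card : (f.erase w).card = K := by
      rw [Finset.card_erase_of_mem hw_f, hf_card]; omega
    obtain ⟨h, hh_img, hh_inj⟩ := enum_exists (f.erase w) hfw_card
    have hmem2 : ∀ t < K, h t ∈ f.erase w := by
      intro t ht
      rw [← hh_img]
      exact Finset.mem_image.mpr ⟨t, Finset.mem_range.mpr ht, rfl⟩
    -- disjointness facts
    have hdisj1 : ∀ y ∈ e.erase v, y ∉ S := by
      intro y hy hyS
      exact (Finset.mem_erase.mp hy).1 (he_avoid y hyS (Finset.mem_of_mem_erase hy))
    have hdisj2 : ∀ y ∈ f.erase w, y ∉ S ∧ y ∉ e := by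
      intro y hy
      constructor
      · intro hyS
        exact (Finset.mem_erase.mp hy).1
          (hf_avoid y (Finset.mem_union_left _ hyS) (Finset.mem_of_mem_erase hy))
      · intro hye
        exact (Finset.mem_erase.mp hy).1
          (hf_avoid y (Finset.mem_union_right _ hye) (Finset.mem_of_mem_erase hy))
    -- the extended map
    set base : ℕ := i * (2 * K) with hbase
    set φ' : ℕ → ℕ := fun x =>
      if x ≤ base then φ x
      else if x ≤ base + K then g (x - (base + 1))
      else if x ≤ base + 2 * K then h (x - (base + K + 1))
      else v with hφ'def
    have hval0 : ∀ x, x ≤ base → φ' x = φ x := by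
      intro x hx; simp only [hφ'def, if_pos hx]
    have hval1 : ∀ t, t < K → φ' (base + 1 + t) = g t := by
      intro t ht
      simp only [hφ'def]
      rw [if_neg (by omega), if_pos (by omega)]
      congr 1; omega
    have hvalw : φ' (base + K) = w := by
      simp only [hφ'def]
      rw [if_neg (by omega), if_pos (by omega)]
      rw [hwdef]; congr 1; omega
    have hval2 : ∀ t, t < K → φ' (base + K + 1 + t) = h t := by
      intro t ht
      simp only [hφ'def]
      rw [if_neg (by omega), if_neg (by omega), if_pos (by omega)]
      congr 1; omega
    -- value classification on the new range
    have hclass : ∀ x, x ≤ base + 2 * K →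
        (x ≤ base ∧ φ' x = φ x ∧ φ' x ∈ S) ∨
        (base + 1 ≤ x ∧ x ≤ base + K ∧ φ' x ∈ e.erase v) ∨
        (base + K + 1 ≤ x ∧ φ' x ∈ f.erase w) := by
      intro x hx
      rcases Nat.lt_or_ge base x with h1 | h1
      · rcases Nat.lt_or_ge (base + K) x with h2 | h2
        · refine Or.inr (Or.inr ⟨by omega, ?_⟩)
          have := hval2 (x - (base + K + 1)) (by omega)
          have hx' : base + K + 1 + (x - (base + K + 1)) = x := by omega
          rw [hx'] at this
          rw [this]
          exact hmem2 _ (by omega)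
        · refine Or.inr (Or.inl ⟨by omega, by omega, ?_⟩)
          have := hval1 (x - (base + 1)) (by omega)
          have hx' : base + 1 + (x - (base + 1)) = x := by omega
          rw [hx'] at this
          rw [this]
          exact hmem1 _ (by omega)
      · refine Or.inl ⟨h1, hval0 x h1, ?_⟩
        rw [hval0 x h1, hSdef]
        exact Finset.mem_image.mpr ⟨x, Finset.mem_range.mpr (by omega), rfl⟩
    have hsucc : (i + 1) * (2 * K) = base + 2 * K := by
      rw [hbase, add_mul, one_mul]
    refine ⟨φ', by rw [hval0 0 (by omega)]; exact hφ0, ?_, ?_, ?_⟩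
    · -- injectivity
      intro x hx y hy hxy
      simp only [Finset.coe_range, Set.mem_Iio, hsucc] at hx hy
      have hx' : x ≤ base + 2 * K := by omega
      have hy' : y ≤ base + 2 * K := by omega
      rcases hclass x hx' with ⟨hx1, hx2, hx3⟩ | ⟨hx1, hx2, hx3⟩ | ⟨hx1, hx3⟩ <;>
        rcases hclass y hy' with ⟨hy1, hy2, hy3⟩ | ⟨hy1, hy2, hy3⟩ | ⟨hy1, hy3⟩
      · -- both old
        rw [hx2, hy2] at hxy
        exact hinj (by simp only [Finset.coe_range, Set.mem_Iio]; omega)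
          (by simp only [Finset.coe_range, Set.mem_Iio]; omega) hxy
      · exact absurd hx3 (by rw [hxy]; exact fun hS => hdisj1 _ hy3 hS)
      · exact absurd hx3 (by rw [hxy]; exact fun hS => (hdisj2 _ hy3).1 hS)
      · exact absurd hy3 (by rw [← hxy]; exact fun hS => hdisj1 _ hx3 hS)
      · -- both middle
        have e1 := hval1 (x - (base + 1)) (by omega)
        have e2 := hval1 (y - (base + 1)) (by omega)
        rw [show base + 1 + (x - (base + 1)) = x by omega] at e1
        rw [show base + 1 + (y - (base + 1)) = y by omega] at e2
        rw [e1, e2] at hxy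
        have := hg_inj _ (by omega) _ (by omega) hxy
        omega
      · -- middle vs last : value in e vs not in e
        exact absurd ((Finset.mem_of_mem_erase hx3) : φ' x ∈ e)
          (by rw [hxy]; exact (hdisj2 _ hy3).2)
      · exact absurd hy3 (by rw [← hxy]; exact fun hS => (hdisj2 _ hx3).1 hS)
      · exact absurd ((Finset.mem_of_mem_erase hy3) : φ' y ∈ e)
          (by rw [← hxy]; exact (hdisj2 _ hx3).2)
      · -- both last
        have e1 := hval2 (x - (base + K + 1)) (by omega)
        have e2 := hval2 (y - (base + K + 1)) (by omega)
        rw [show base + K + 1 + (x - (base + K + 1)) = x by omega] at e1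
        rw [show base + K + 1 + (y - (base + K + 1)) = y by omega] at e2
        rw [e1, e2] at hxy
        have := hh_inj _ (by omega) _ (by omega) hxy
        omega
    · -- maps into range N
      intro x hx
      rw [Finset.mem_range, hsucc] at hx
      rcases hclass x (by omega) with ⟨_, hx2, _⟩ | ⟨_, _, hx3⟩ | ⟨_, hx3⟩
      · rw [hx2]; exact hmaps x (Finset.mem_range.mpr (by omega))
      · -- in e.erase v ⊆ U₁ ⊆ range N
        have hm := Finset.mem_of_mem_erase hx3
        rcases Finset.mem_insert.mp (he_sub hm) with hh | hh
        · exact absurd hh (Finset.mem_erase.mp hx3).1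
        · exact hU₀ (hsub hh)
      · have hm := Finset.mem_of_mem_erase hx3
        rcases Finset.mem_insert.mp (hf_sub hm) with hh | hh
        · exact absurd hh (Finset.mem_erase.mp hx3).1
        · exact hU₀ hh
    · -- colors
      intro j hj
      rcases Nat.lt_or_ge j i with hji | hji
      · -- old arm: images unchanged
        have hEeq : (armE K j).image φ' = (armE K j).image φ := by
          apply Finset.image_congr
          intro x hx
          rw [Finset.mem_coe, mem_armE] at hx
          have hb : j * (2 * K) + 2 * K ≤ base := by rw [hbase]; exact mul_sep hji
          apply hval0
          rcases hx with rfl | ⟨_, h2⟩ <;> omega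
        have hFeq : (armF K j).image φ' = (armF K j).image φ := by
          apply Finset.image_congr
          intro x hx
          rw [Finset.mem_coe, mem_armF] at hx
          have hb : j * (2 * K) + 2 * K ≤ base := by rw [hbase]; exact mul_sep hji
          apply hval0; omega
        rw [hEeq, hFeq]
        exact hcolor j hji
      · -- new arm : j = i
        have hji' : j = i := by omega
        subst hji'
        have himgE : (armE K j).image φ' = e := by
          apply Finset.Subset.antisymm
          · intro y hy
            obtain ⟨x, hx, rfl⟩ := Finset.mem_image.mp hy
            rw [mem_armE] at hx
            rcases hx with rfl | ⟨h1, h2⟩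
            · rw [hval0 0 (by omega), hφ0]; exact hv_e
            · have := hval1 (x - (base + 1)) (by rw [hbase] at *; omega)
              rw [show base + 1 + (x - (base + 1)) = x by rw [hbase] at *; omega] at this
              rw [this]
              exact Finset.mem_of_mem_erase (hmem1 _ (by rw [hbase] at *; omega))
          · intro y hy
            by_cases hyv : y = v
            · subst hyv
              exact Finset.mem_image.mpr ⟨0, mem_armE.mpr (Or.inl rfl),
                by rw [hval0 0 (by omega)]; exact hφ0⟩
            · have hy' : y ∈ e.erase v := Finset.mem_erase.mpr ⟨hyv, hy⟩
              rw [← hg_img] at hy'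
              obtain ⟨t, ht, rfl⟩ := Finset.mem_image.mp hy'
              rw [Finset.mem_range] at ht
              refine Finset.mem_image.mpr ⟨base + 1 + t, ?_, hval1 t ht⟩
              rw [mem_armE, hbase]
              exact Or.inr ⟨by omega, by omega⟩
        have himgF : (armF K j).image φ' = f := by
          apply Finset.Subset.antisymm
          · intro y hy
            obtain ⟨x, hx, rfl⟩ := Finset.mem_image.mp hy
            rw [mem_armF] at hx
            rcases Nat.lt_or_ge (base + K) x with h1 | h1
            · have := hval2 (x - (base + K + 1)) (by rw [hbase] at *; omega)
              rw [show base + K + 1 + (x - (base + K + 1)) = x by rw [hbase] at *; omega] at this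
              rw [this]
              exact Finset.mem_of_mem_erase (hmem2 _ (by rw [hbase] at *; omega))
            · have hxe : x = base + K := by rw [hbase] at *; omega
              rw [hxe, hvalw]; exact hw_f
          · intro y hy
            by_cases hyw : y = w
            · subst hyw
              refine Finset.mem_image.mpr ⟨base + K, ?_, hvalw⟩
              rw [mem_armF, hbase]
              constructor <;> omega
            · have hy' : y ∈ f.erase w := Finset.mem_erase.mpr ⟨hyw, hy⟩
              rw [← hh_img] at hy'
              obtain ⟨t, ht, rfl⟩ := Finset.mem_image.mp hy'
              rw [Finset.mem_range] at ht
              refine Finset.mem_image.mpr ⟨base + K + 1 + t, ?_, hval2 t ht⟩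
              rw [mem_armF, hbase]
              constructor <;> omega
        rw [himgE, himgF]
        exact ⟨he_c, hf_c⟩

lemma level_step (χ : Finset ℕ → Bool) (K B : ℕ) (U : Finset ℕ)
    (hU : 2 * B + (K + 1) ≤ U.card) :
    ∃ (c : Bool) (W : Finset ℕ), W ⊆ U ∧ U.card ≤ 2 * W.card ∧
      ∀ w ∈ W, Rich χ (K + 1) B U c w := by
  classical
  set Wt := U.filter (fun w => Rich χ (K + 1) B U true w) with hWt
  set Wf := U.filter (fun w => Rich χ (K + 1) B U false w) with hWf
  have hcover : U ⊆ Wt ∪ Wf := by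
    intro w hw
    rcases rich_total χ (K + 1) B (by omega) U hU w with h | h
    · exact Finset.mem_union_left _ (Finset.mem_filter.mpr ⟨hw, h⟩)
    · exact Finset.mem_union_right _ (Finset.mem_filter.mpr ⟨hw, h⟩)
  have hcard : U.card ≤ Wt.card + Wf.card :=
    (Finset.card_le_card hcover).trans (Finset.card_union_le _ _)
  rcases le_or_gt Wf.card Wt.card with h | h
  · exact ⟨true, Wt, Finset.filter_subset _ _, by omega,
      fun w hw => (Finset.mem_filter.mp hw).2⟩
  · exact ⟨false, Wf, Finset.filter_subset _ _, by omega,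
      fun w hw => (Finset.mem_filter.mp hw).2⟩

lemma complete_arrows (K a : ℕ) (hK : 1 ≤ K) (ha : 1 ≤ a) (T : KHypergraph (K + 1))
    (hV : T.verts = Finset.range (a * (2 * K) + 1))
    (hE : T.edges = (Finset.range a).biUnion fun i => {armE K i, armF K i}) :
    (KHypergraph.completeHG (K + 1)
      (8 * (2 * (a * (2 * K) + 1 + (K + 1)) + (K + 1)))).Arrows T := by
  classical
  set B : ℕ := a * (2 * K) + 1 + (K + 1) with hBdef
  set M : ℕ := 2 * B + (K + 1) with hMdef
  set N : ℕ := 8 * M with hNdef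
  intro χ
  -- three levels of rich majorities
  obtain ⟨c₁, W₁, hW₁sub, hW₁card, hW₁rich⟩ :=
    level_step χ K B (Finset.range N) (by rw [Finset.card_range]; omega)
  have hW₁c : 4 * M ≤ W₁.card := by
    have := Finset.card_range N
    omega
  obtain ⟨c₂, W₂, hW₂sub, hW₂card, hW₂rich⟩ := level_step χ K B W₁ (by omega)
  have hW₂c : 2 * M ≤ W₂.card := by omega
  obtain ⟨c₃, W₃, hW₃sub, hW₃card, hW₃rich⟩ := level_step χ K B W₂ (by omega)
  have hW₃ne : W₃.Nonempty := by
    rw [← Finset.card_pos]; omega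
  obtain ⟨v, hvW₃⟩ := hW₃ne
  -- choose matching colors and apply build_copy
  have key : ∃ (c : Bool) (U₀ U₁ : Finset ℕ) (v' : ℕ),
      U₀ ⊆ Finset.range N ∧ U₁ ⊆ U₀ ∧ v' ∈ Finset.range N ∧
      (∀ w ∈ U₁, Rich χ (K + 1) B U₀ c w) ∧ Rich χ (K + 1) B U₁ c v' := by
    by_cases h12 : c₁ = c₂
    · refine ⟨c₂, Finset.range N, W₁, v, le_refl _, hW₁sub,
        hW₁sub (hW₂sub (hW₃sub hvW₃)), fun w hw => h12 ▸ hW₁rich w hw, ?_⟩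
      exact hW₂rich v (hW₃sub hvW₃)
    · by_cases h23 : c₂ = c₃
      · refine ⟨c₃, W₁, W₂, v, hW₁sub, hW₂sub,
          hW₁sub (hW₂sub (hW₃sub hvW₃)), fun w hw => h23 ▸ hW₂rich w hw, ?_⟩
        exact hW₃rich v hvW₃
      · have h13 : c₁ = c₃ := by
          cases c₁ <;> cases c₂ <;> cases c₃ <;> simp_all
        refine ⟨c₃, Finset.range N, W₂, v, le_refl _, fun x hx => hW₁sub (hW₂sub hx),
          hW₁sub (hW₂sub (hW₃sub hvW₃)), fun w hw => h13 ▸ hW₁rich w (hW₂sub hw), ?_⟩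
        exact hW₃rich v hvW₃
  obtain ⟨c, U₀, U₁, v', hU₀, hsub, hv', hrich1, hvrich⟩ := key
  obtain ⟨φ, hφ0, hinj, hmaps, hcolor⟩ :=
    build_copy K a N B hK hBdef χ U₀ U₁ c v' hU₀ hsub hv' hrich1 hvrich a (le_refl a)
  refine ⟨φ, c, ⟨?_, ?_, ?_⟩, ?_⟩
  · rw [hV]; exact hinj
  · rw [hV]
    intro x hx
    rw [Finset.mem_coe] at hx
    exact Finset.mem_coe.mpr (hmaps x hx)
  · intro e he
    have hsubV : e ⊆ Finset.range (a * (2 * K) + 1) := by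
      rw [← hV]; exact T.subset_verts e he
    refine Finset.mem_powersetCard.mpr ⟨?_, ?_⟩
    · intro y hy
      obtain ⟨x, hx, rfl⟩ := Finset.mem_image.mp hy
      exact hmaps x (hsubV hx)
    · have hinj' : Set.InjOn φ ↑e := fun x hx y hy hxy =>
        hinj (Finset.mem_coe.mpr (hsubV hx)) (Finset.mem_coe.mpr (hsubV hy)) hxy
      rw [Finset.card_image_of_injOn hinj', T.card_eq e he]
  · intro e he
    rw [hE] at he
    obtain ⟨i, hi, hmem⟩ := Finset.mem_biUnion.mp he
    rw [Finset.mem_range] at hi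
    rcases Finset.mem_insert.mp hmem with rfl | hmem'
    · exact (hcolor i hi).1
    · rw [Finset.mem_singleton] at hmem'
      subst hmem'
      exact (hcolor i hi).2

lemma arrows_lb (K a : ℕ) (hK : 1 ≤ K) (ha : 1 ≤ a) (T : KHypergraph (K + 1))
    (hV : T.verts = Finset.range (a * (2 * K) + 1))
    (hE : T.edges = (Finset.range a).biUnion fun i => {armE K i, armF K i})
    (H : KHypergraph (K + 1)) (hH : H.Arrows T) : a * a ≤ H.edges.card := by
  obtain ⟨C, hC1, hC2⟩ := greedyCover a ha H.edges
  set χ : Finset ℕ → Bool := fun e => decide (∃ u ∈ C, u ∈ e) with hχ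
  obtain ⟨f, c, ⟨hinj, hmaps, hedges⟩, hmono⟩ := hH χ
  have harmE_mem : ∀ i, i < a → armE K i ∈ T.edges := by
    intro i hi
    rw [hE]
    exact Finset.mem_biUnion.mpr ⟨i, Finset.mem_range.mpr hi,
      Finset.mem_insert_self _ _⟩
  have harmF_mem : ∀ i, i < a → armF K i ∈ T.edges := by
    intro i hi
    rw [hE]
    exact Finset.mem_biUnion.mpr ⟨i, Finset.mem_range.mpr hi,
      Finset.mem_insert_of_mem (Finset.mem_singleton_self _)⟩
  have hvertsE : ∀ i, i < a → (armE K i : Set ℕ) ⊆ ↑T.verts := by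
    intro i hi
    rw [hV]
    exact_mod_cast armE_subset hi
  have hvertsF : ∀ i, i < a → (armF K i : Set ℕ) ⊆ ↑T.verts := by
    intro i hi
    rw [hV]
    exact_mod_cast armF_subset hi
  cases c with
  | false =>
    -- all center edges avoid C: contradiction with greedy bound at f 0
    exfalso
    have hkey : ∀ i, i < a → (armE K i).image f ∈
        H.edges.filter fun e => f 0 ∈ e ∧ ∀ u ∈ C, u ∉ e := by
      intro i hi
      refine Finset.mem_filter.mpr ⟨hedges _ (harmE_mem i hi), ?_, ?_⟩
      · exact Finset.mem_image.mpr ⟨0, mem_armE.mpr (Or.inl rfl), rfl⟩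
      · intro u huC hue
        have := hmono _ (harmE_mem i hi)
        rw [hχ] at this
        simp only [decide_eq_false_iff_not] at this
        exact this ⟨u, huC, hue⟩
    have hij : ∀ i ∈ Finset.range a, ∀ j ∈ Finset.range a,
        (armE K i).image f = (armE K j).image f → i = j := by
      intro i hi j hj heq
      rw [Finset.mem_range] at hi hj
      have hx : i * (2 * K) + 1 ∈ armE K i := mem_armE.mpr (Or.inr ⟨le_refl _, by omega⟩)
      have : f (i * (2 * K) + 1) ∈ (armE K j).image f := by
        rw [← heq]
        exact Finset.mem_image.mpr ⟨_, hx, rfl⟩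
      obtain ⟨y, hy, hfy⟩ := Finset.mem_image.mp this
      have hyx : y = i * (2 * K) + 1 :=
        hinj (hvertsE j hj hy) (hvertsE i hi hx) hfy
      exact armE_overlap hK hx (hyx ▸ hy) (by omega)
    have hcard : a ≤ (H.edges.filter fun e => f 0 ∈ e ∧ ∀ u ∈ C, u ∉ e).card := by
      have := Finset.card_le_card_of_injOn (fun i => (armE K i).image f)
        (fun i hi => hkey i (Finset.mem_range.mp hi))
        (fun i hi j hj heq => hij i hi j hj heq)
      rwa [Finset.card_range] at this
    exact absurd hcard (not_le.mpr (hC2 (f 0)))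
  | true =>
    -- every second arm edge image meets C; they are pairwise disjoint
    have hne : ∀ i, i < a → ∃ u, u ∈ C ∧ u ∈ (armF K i).image f := by
      intro i hi
      have := hmono _ (harmF_mem i hi)
      rw [hχ] at this
      simp only [decide_eq_true_eq] at this
      obtain ⟨u, h1, h2⟩ := this
      exact ⟨u, h1, h2⟩
    choose u hu1 hu2 using hne
    have haC : a ≤ C.card := by
      set F : ℕ → ℕ := fun i => if h : i < a then u i h else 0 with hF
      have hmapsF : ∀ i ∈ Finset.range a, F i ∈ C := by
        intro i hi
        have hi' := Finset.mem_range.mp hi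
        rw [hF]
        simp only [dif_pos hi']
        exact hu1 i hi'
      have hinjF : Set.InjOn F ↑(Finset.range a) := by
        intro i hi j hj heq
        rw [Finset.mem_coe, Finset.mem_range] at hi hj
        rw [hF] at heq
        simp only [dif_pos hi, dif_pos hj] at heq
        have h1 := hu2 i hi
        have h2 := hu2 j hj
        rw [heq] at h1
        obtain ⟨yi, hyi, hfyi⟩ := Finset.mem_image.mp h1
        obtain ⟨yj, hyj, hfyj⟩ := Finset.mem_image.mp h2
        have : yi = yj := hinj (hvertsF i hi hyi) (hvertsF j hj hyj)
          (by rw [hfyi, hfyj])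
        exact armF_overlap hK (this ▸ hyi) hyj
      have := Finset.card_le_card_of_injOn F hmapsF hinjF
      rwa [Finset.card_range] at this
    calc a * a ≤ a * C.card := Nat.mul_le_mul_left a haC
      _ ≤ H.edges.card := hC1

end SizeRamseyAux

/-- Let `k ≥ 2`, `n > 2k−1` with `(2k−2) ∣ (n−1)` and `a = (n−1)/(2k−2)`.
Let `T` be the `k`-uniform star-like tree of order `n` with center `0` and `a` arms, the
`i`-th arm having the two edges `{0, i(2k−2)+1, …, i(2k−2)+(k−1)}` and
`{i(2k−2)+(k−1), …, i(2k−2)+(2k−2)}` (all non-center vertices pairwise distinct).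
Then `R̂(T) ≥ (1/3)·a²`. -/
theorem stmt2 (k n a : ℕ) (hk : 2 ≤ k) (hn : 2 * k - 1 < n)
    (hdvd : (2 * k - 2) ∣ (n - 1)) (ha : a = (n - 1) / (2 * k - 2))
    (T : KHypergraph k)
    (hV : T.verts = Finset.range (a * (2 * k - 2) + 1))
    (hE : T.edges =
      (Finset.range a).biUnion fun i =>
        {insert 0 ((Finset.range (k - 1)).image fun j => i * (2 * k - 2) + 1 + j),
         (Finset.range k).image fun j => i * (2 * k - 2) + (k - 1) + j}) :
    (1 / 3 : ℝ) * (a : ℝ) ^ 2 ≤ (T.sizeRamsey : ℝ) := by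
  obtain ⟨K, rfl⟩ : ∃ K, k = K + 1 := ⟨k - 1, by omega⟩
  have hK : 1 ≤ K := by omega
  have h2k : 2 * (K + 1) - 2 = 2 * K := by omega
  have h1k : K + 1 - 1 = K := by omega
  rw [h2k] at hV ha
  have ha1 : 1 ≤ a := by
    rw [ha, Nat.one_le_div_iff (by omega : 0 < 2 * K)]
    omega
  simp only [h2k, h1k] at hE
  have hE' : T.edges = (Finset.range a).biUnion fun i => {armE K i, armF K i} := hE
  have hSne : { m | ∃ H : KHypergraph (K + 1), H.Arrows T ∧ H.edges.card = m }.Nonempty :=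
    ⟨_, KHypergraph.completeHG _ _, complete_arrows K a hK ha1 T hV hE', rfl⟩
  obtain ⟨H₀, hH₀, hcard⟩ := Nat.sInf_mem hSne
  have hmain : a * a ≤ T.sizeRamsey := by
    rw [KHypergraph.sizeRamsey, ← hcard]
    exact arrows_lb K a hK ha1 T hV hE' H₀ hH₀
  have hcast : (a : ℝ) * a ≤ (T.sizeRamsey : ℝ) := by exact_mod_cast hmain
  rw [pow_two]
  nlinarith [mul_self_nonneg (a : ℝ)]
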